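/- Let v, h be positive integers, n := v + h, Q ∈ ℝ^{n×n} symmetric, σ ∈ (0,1), and β_σ := log((1−σ)/σ). For ρ > 0 and x̃ ∈ {0,1}^v, let Q̃^{ρ,x̃} be Q with diagonal entries Q_{ii} + ρ(1 − 2x̃_i) for 1 ≤ i ≤ v (other entries unchanged), and define the thresholded average x̄(ρ,x̃) ∈ {0,1}^n by x̄(ρ,x̃)_i := 1 if Σ_{x ∈ {0,1}^n} P_{Q̃^{ρ,x̃}}(x) x_i > 1/2 and 0 otherwise. Define the overlap m(x, x') := (1/n)·Σ_{i=1}^n (2x_i − 1)(2x'_i − 1) and the averaged overlap M(ρ) := Σ_{x̃ ∈ {0,1}^v} Σ_{x ∈ {0,1}^n} P_σ(x̃ | x_{1..v}) P_Q(x) m(x̄(ρ,x̃), x), where P_σ(x̃ | x_{1..v}) = exp(−β_σ Σ_{i=1}^v (x̃_i − x_i)²)/(1 + e^{−β_σ})^v. Then for every ρ > 0, M(ρ) ≤ M(β_σ); that is, the averaged overlap is maximized by the choice ρ = log((1−σ)/σ). -/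

import Mathlib

noncomputable section

/-- Real-valued binary vector corresponding to a boolean vector. -/
def bvec {n : ℕ} (b : Fin n → Bool) : Fin n → ℝ := fun i => if b i then 1 else 0

/-- QUBO energy `f_Q(x) = Σ_{i,j} Q_{ij} x_i x_j`. -/
def quboEnergy {n : ℕ} (Q : Matrix (Fin n) (Fin n) ℝ) (x : Fin n → ℝ) : ℝ :=
  ∑ i, ∑ j, Q i j * x i * x j

/-- Boltzmann distribution on `{0,1}^n` with energy `f_Q`. -/
def boltzmann {n : ℕ} (Q : Matrix (Fin n) (Fin n) ℝ) (x : Fin n → Bool) : ℝ :=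
  Real.exp (-quboEnergy Q (bvec x)) /
    ∑ y : Fin n → Bool, Real.exp (-quboEnergy Q (bvec y))

/-- The modified matrix `Q̃^{ρ,x̃}`: `Q` with diagonal entries `Q_{ii} + ρ(1 - 2x̃_i)`
for the visible indices `i < v`, all other entries unchanged. -/
def modMatrixVis (v h : ℕ) (Q : Matrix (Fin (v + h)) (Fin (v + h)) ℝ) (ρ : ℝ)
    (xt : Fin v → Bool) : Matrix (Fin (v + h)) (Fin (v + h)) ℝ :=
  fun i j =>
    if i = j then
      (if hi : (i : ℕ) < v then
        Q i i + ρ * (1 - 2 * (if xt ⟨i, hi⟩ then (1 : ℝ) else 0))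
      else Q i i)
    else Q i j

/-- The thresholded average `x̄(ρ,x̃)`: pixel `i` is 1 iff the mean of coordinate `i`
under the Boltzmann distribution of the modified matrix exceeds 1/2. -/
def xbar (v h : ℕ) (Q : Matrix (Fin (v + h)) (Fin (v + h)) ℝ) (ρ : ℝ)
    (xt : Fin v → Bool) : Fin (v + h) → ℝ :=
  fun i =>
    if (1 / 2 : ℝ) < ∑ x : Fin (v + h) → Bool, boltzmann (modMatrixVis v h Q ρ xt) x * bvec x i
    then 1 else 0

/-- Overlap `m(x,x') = (1/n)·Σᵢ (2xᵢ - 1)(2x'ᵢ - 1)`. -/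
def overlap {n : ℕ} (x x' : Fin n → ℝ) : ℝ :=
  (1 / (n : ℝ)) * ∑ i, (2 * x i - 1) * (2 * x' i - 1)

/-- Salt-and-pepper noise probability of observing `x̃` on the visible part of `x`,
in Boltzmann form with inverse temperature `β`. -/
def noiseProbVis (v h : ℕ) (β : ℝ) (xt : Fin v → Bool) (x : Fin (v + h) → Bool) : ℝ :=
  Real.exp (-β * ∑ i : Fin v,
      ((if xt i then (1 : ℝ) else 0) - bvec x (Fin.castAdd h i)) ^ 2) /
    (1 + Real.exp (-β)) ^ v

/-- The averaged overlap `M(ρ)` between the true image and the thresholded denoised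
average, where the true image is drawn from `P_Q` and then afflicted by noise. -/
def avgOverlap (v h : ℕ) (Q : Matrix (Fin (v + h)) (Fin (v + h)) ℝ) (β ρ : ℝ) : ℝ :=
  ∑ xt : Fin v → Bool, ∑ x : Fin (v + h) → Bool,
    noiseProbVis v h β xt x * boltzmann Q x * overlap (xbar v h Q ρ xt) (bvec x)

namespace Stmt5Aux

/-- The "interaction" part of the noise exponent. -/
def S (v h : ℕ) (xt : Fin v → Bool) (x : Fin (v + h) → Bool) : ℝ :=
  ∑ i : Fin v, bvec x (Fin.castAdd h i) * (1 - 2 * (if xt i then (1 : ℝ) else 0))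

/-- The posterior mean of coordinate `i`. -/
def mean (v h : ℕ) (Q : Matrix (Fin (v + h)) (Fin (v + h)) ℝ) (ρ : ℝ)
    (xt : Fin v → Bool) (i : Fin (v + h)) : ℝ :=
  ∑ x : Fin (v + h) → Bool, boltzmann (modMatrixVis v h Q ρ xt) x * bvec x i

/-- The correlation between the weight and the `i`-th spin. -/
def Acorr (v h : ℕ) (Q : Matrix (Fin (v + h)) (Fin (v + h)) ℝ) (β : ℝ)
    (xt : Fin v → Bool) (i : Fin (v + h)) : ℝ :=
  ∑ x : Fin (v + h) → Bool,
    noiseProbVis v h β xt x * boltzmann Q x * (2 * bvec x i - 1)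

lemma partition_pos {n : ℕ} (Q : Matrix (Fin n) (Fin n) ℝ) :
    0 < ∑ y : Fin n → Bool, Real.exp (-quboEnergy Q (bvec y)) :=
  Finset.sum_pos (fun _ _ => Real.exp_pos _) Finset.univ_nonempty

lemma sum_boltzmann {n : ℕ} (Q : Matrix (Fin n) (Fin n) ℝ) :
    ∑ x : Fin n → Bool, boltzmann Q x = 1 := by
  unfold boltzmann
  rw [← Finset.sum_div]
  exact div_self (ne_of_gt (partition_pos Q))

lemma energy_mod (v h : ℕ) (Q : Matrix (Fin (v + h)) (Fin (v + h)) ℝ) (ρ : ℝ)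
    (xt : Fin v → Bool) (x : Fin (v + h) → Bool) :
    quboEnergy (modMatrixVis v h Q ρ xt) (bvec x)
      = quboEnergy Q (bvec x) + ρ * S v h xt x := by
  unfold quboEnergy
  have step1 : ∀ i j : Fin (v + h),
      modMatrixVis v h Q ρ xt i j * bvec x i * bvec x j
        = Q i j * bvec x i * bvec x j +
          (if i = j then
            (if hi : (i : ℕ) < v then
              ρ * (1 - 2 * (if xt ⟨i, hi⟩ then (1 : ℝ) else 0)) else 0) * bvec x i
          else 0) := by
    intro i j
    by_cases hij : i = j
    · subst hij
      unfold modMatrixVis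
      rw [if_pos rfl, if_pos rfl]
      by_cases hi : (i : ℕ) < v
      · rw [dif_pos hi, dif_pos hi]
        unfold bvec; by_cases hx : x i = true <;> simp only [hx, if_true, if_false] <;> split <;> norm_num
      · rw [dif_neg hi, dif_neg hi]; ring
    · unfold modMatrixVis
      rw [if_neg hij, if_neg hij]; ring
  calc ∑ i, ∑ j, modMatrixVis v h Q ρ xt i j * bvec x i * bvec x j
      = ∑ i, ∑ j, (Q i j * bvec x i * bvec x j +
          (if i = j then
            (if hi : (i : ℕ) < v then
              ρ * (1 - 2 * (if xt ⟨i, hi⟩ then (1 : ℝ) else 0)) else 0) * bvec x i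
          else 0)) := by
        exact Finset.sum_congr rfl fun i _ => Finset.sum_congr rfl fun j _ => step1 i j
    _ = (∑ i, ∑ j, Q i j * bvec x i * bvec x j) +
        ∑ i : Fin (v + h),
          (if hi : (i : ℕ) < v then
            ρ * (1 - 2 * (if xt ⟨i, hi⟩ then (1 : ℝ) else 0)) else 0) * bvec x i := by
        rw [← Finset.sum_add_distrib]
        refine Finset.sum_congr rfl fun i _ => ?_
        rw [Finset.sum_add_distrib]
        congr 1
        simp [Finset.sum_ite_eq]
    _ = (∑ i, ∑ j, Q i j * bvec x i * bvec x j) + ρ * S v h xt x := by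
        congr 1
        rw [Fin.sum_univ_add]
        have h2 : ∀ j : Fin h,
            (if hi : ((Fin.natAdd v j : Fin (v + h)) : ℕ) < v then
              ρ * (1 - 2 * (if xt ⟨_, hi⟩ then (1 : ℝ) else 0)) else 0) *
              bvec x (Fin.natAdd v j) = 0 := by
          intro j
          rw [dif_neg (by simp [Fin.natAdd])]
          ring
        rw [Finset.sum_congr rfl (fun j _ => h2 j), Finset.sum_const_zero, add_zero]
        unfold S
        rw [Finset.mul_sum]
        refine Finset.sum_congr rfl fun i _ => ?_
        have hi : ((Fin.castAdd h i : Fin (v + h)) : ℕ) < v := by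
          simpa using i.isLt
        rw [dif_pos hi]
        have : (⟨((Fin.castAdd h i : Fin (v + h)) : ℕ), hi⟩ : Fin v) = i := by
          ext; simp
        rw [this]
        ring

/-- The constant relating the joint weight to the posterior Boltzmann weight. -/
def Cconst (v h : ℕ) (Q : Matrix (Fin (v + h)) (Fin (v + h)) ℝ) (β : ℝ)
    (xt : Fin v → Bool) : ℝ :=
  Real.exp (-β * ∑ i : Fin v, (if xt i then (1 : ℝ) else 0)) / (1 + Real.exp (-β)) ^ v *
    ((∑ y : Fin (v + h) → Bool,
        Real.exp (-quboEnergy (modMatrixVis v h Q β xt) (bvec y))) /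
      ∑ y : Fin (v + h) → Bool, Real.exp (-quboEnergy Q (bvec y)))

lemma Cconst_pos (v h : ℕ) (Q : Matrix (Fin (v + h)) (Fin (v + h)) ℝ) (β : ℝ)
    (xt : Fin v → Bool) : 0 < Cconst v h Q β xt := by
  unfold Cconst
  have h1 : (0:ℝ) < (1 + Real.exp (-β)) ^ v :=
    pow_pos (by positivity) v
  exact mul_pos (div_pos (Real.exp_pos _) h1)
    (div_pos (partition_pos _) (partition_pos _))

lemma weight_eq (v h : ℕ) (Q : Matrix (Fin (v + h)) (Fin (v + h)) ℝ) (β : ℝ)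
    (xt : Fin v → Bool) (x : Fin (v + h) → Bool) :
    noiseProbVis v h β xt x * boltzmann Q x
      = Cconst v h Q β xt * boltzmann (modMatrixVis v h Q β xt) x := by
  have hexp : ∀ i : Fin v,
      ((if xt i then (1 : ℝ) else 0) - bvec x (Fin.castAdd h i)) ^ 2
        = (if xt i then (1 : ℝ) else 0) +
          bvec x (Fin.castAdd h i) * (1 - 2 * (if xt i then (1 : ℝ) else 0)) := by
    intro i
    unfold bvec
    cases xt i <;> cases x (Fin.castAdd h i) <;> norm_num
  have hsum : ∑ i : Fin v, ((if xt i then (1 : ℝ) else 0) - bvec x (Fin.castAdd h i)) ^ 2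
      = (∑ i : Fin v, (if xt i then (1 : ℝ) else 0)) + S v h xt x := by
    unfold S
    rw [← Finset.sum_add_distrib]
    exact Finset.sum_congr rfl fun i _ => hexp i
  unfold noiseProbVis boltzmann Cconst
  rw [hsum, energy_mod]
  have hZq := partition_pos Q
  have hZm := partition_pos (modMatrixVis v h Q β xt)
  have hpow : ((1:ℝ) + Real.exp (-β)) ^ v ≠ 0 := by positivity
  have e1 : Real.exp (-β * ((∑ i : Fin v, if xt i = true then (1:ℝ) else 0) + S v h xt x))
      = Real.exp (-β * ∑ i : Fin v, if xt i = true then (1:ℝ) else 0) *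
        Real.exp (-(β * S v h xt x)) := by
    rw [← Real.exp_add]; congr 1; ring
  have e2 : Real.exp (-(quboEnergy Q (bvec x) + β * S v h xt x))
      = Real.exp (-quboEnergy Q (bvec x)) * Real.exp (-(β * S v h xt x)) := by
    rw [← Real.exp_add]; congr 1; ring
  rw [e1, e2]
  have hZq' := hZq.ne'
  have hZm' := hZm.ne'
  field_simp

lemma Acorr_eq (v h : ℕ) (Q : Matrix (Fin (v + h)) (Fin (v + h)) ℝ) (β : ℝ)
    (xt : Fin v → Bool) (i : Fin (v + h)) :
    Acorr v h Q β xt i = Cconst v h Q β xt * (2 * mean v h Q β xt i - 1) := by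
  unfold Acorr
  calc ∑ x : Fin (v + h) → Bool,
        noiseProbVis v h β xt x * boltzmann Q x * (2 * bvec x i - 1)
      = ∑ x : Fin (v + h) → Bool,
          Cconst v h Q β xt * (boltzmann (modMatrixVis v h Q β xt) x * (2 * bvec x i - 1)) := by
        refine Finset.sum_congr rfl fun x _ => ?_
        rw [weight_eq]; ring
    _ = Cconst v h Q β xt *
          ((2 * ∑ x : Fin (v + h) → Bool, boltzmann (modMatrixVis v h Q β xt) x * bvec x i)
            - ∑ x : Fin (v + h) → Bool, boltzmann (modMatrixVis v h Q β xt) x) := by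
        rw [← Finset.mul_sum]
        congr 1
        rw [Finset.mul_sum, ← Finset.sum_sub_distrib]
        exact Finset.sum_congr rfl fun x _ => by ring
    _ = Cconst v h Q β xt * (2 * mean v h Q β xt i - 1) := by
        rw [sum_boltzmann]; rfl

lemma pointwise_le (v h : ℕ) (Q : Matrix (Fin (v + h)) (Fin (v + h)) ℝ) (β ρ : ℝ)
    (xt : Fin v → Bool) (i : Fin (v + h)) :
    (2 * xbar v h Q ρ xt i - 1) * Acorr v h Q β xt i
      ≤ (2 * xbar v h Q β xt i - 1) * Acorr v h Q β xt i := by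
  have hA := Acorr_eq v h Q β xt i
  have hC := Cconst_pos v h Q β xt
  have hRHS : (2 * xbar v h Q β xt i - 1) * Acorr v h Q β xt i = |Acorr v h Q β xt i| := by
    unfold xbar
    split
    · rename_i hgt
      have : 0 < Acorr v h Q β xt i := by
        rw [hA]
        have : 0 < 2 * mean v h Q β xt i - 1 := by
          unfold mean; linarith [hgt]
        exact mul_pos hC this
      rw [abs_of_pos this]; ring
    · rename_i hle
      push_neg at hle
      have : Acorr v h Q β xt i ≤ 0 := by
        rw [hA]
        have : 2 * mean v h Q β xt i - 1 ≤ 0 := by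
          unfold mean; linarith [hle]
        exact mul_nonpos_of_nonneg_of_nonpos hC.le this
      rw [abs_of_nonpos this]; ring
  rw [hRHS]
  unfold xbar
  split
  · rw [show (2 * (1:ℝ) - 1) = 1 by norm_num, one_mul]
    exact le_abs_self _
  · rw [show (2 * (0:ℝ) - 1) = -1 by norm_num, neg_one_mul]
    exact neg_le_abs _

lemma swap_helper {α γ : Type*} [Fintype α] [Fintype γ] (c : ℝ) (w : α → ℝ)
    (f : γ → ℝ) (g : γ → α → ℝ) :
    ∑ x : α, w x * (c * ∑ i : γ, f i * g i x)
      = c * ∑ i : γ, f i * ∑ x : α, w x * g i x := by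
  simp only [Finset.mul_sum]
  rw [Finset.sum_comm]
  exact Finset.sum_congr rfl fun i _ => Finset.sum_congr rfl fun x _ => by ring

lemma avgOverlap_eq (v h : ℕ) (Q : Matrix (Fin (v + h)) (Fin (v + h)) ℝ) (β ρ : ℝ) :
    avgOverlap v h Q β ρ
      = (1 / ((v + h : ℕ) : ℝ)) * ∑ xt : Fin v → Bool, ∑ i : Fin (v + h),
          (2 * xbar v h Q ρ xt i - 1) * Acorr v h Q β xt i := by
  unfold avgOverlap overlap Acorr
  rw [Finset.mul_sum]
  refine Finset.sum_congr rfl fun xt _ => ?_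
  exact swap_helper (1 / ((v + h : ℕ) : ℝ)) (fun x => noiseProbVis v h β xt x * boltzmann Q x)
    (fun i => 2 * xbar v h Q ρ xt i - 1) (fun i x => 2 * bvec x i - 1)

end Stmt5Aux

/-- The averaged overlap `M(ρ)` is maximized by the choice
`ρ = β_σ = log((1-σ)/σ)`: for every `ρ > 0`, `M(ρ) ≤ M(β_σ)`. -/
theorem stmt_5 (v h : ℕ) (hv : 0 < v) (hh : 0 < h)
    (Q : Matrix (Fin (v + h)) (Fin (v + h)) ℝ) (hQ : Q.IsSymm)
    (σ : ℝ) (hσ : σ ∈ Set.Ioo (0 : ℝ) 1)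
    (β : ℝ) (hβ : β = Real.log ((1 - σ) / σ)) :
    ∀ ρ : ℝ, 0 < ρ → avgOverlap v h Q β ρ ≤ avgOverlap v h Q β β := by
  intro ρ _
  rw [Stmt5Aux.avgOverlap_eq v h Q β ρ, Stmt5Aux.avgOverlap_eq v h Q β β]
  refine mul_le_mul_of_nonneg_left ?_ (by positivity)
  refine Finset.sum_le_sum fun xt _ => Finset.sum_le_sum fun i _ => ?_
  exact Stmt5Aux.pointwise_le v h Q β ρ xt i

end
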